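/- Equivalence classes of set compositions of [n] under ∼ are in bijection with integral barred set compositions of [n]: set compositions where some blocks are barred, no two barred blocks occur consecutively, and every singleton block is barred. The bijection sends an equivalence class to the barred composition obtained by merging each maximal run of consecutive singleton blocks into one barred block. -/

import Mathlib

/-- A list of finsets is the list of blocks of a set composition of `[n]`: blocks are
nonempty, pairwise disjoint, and cover `[n]`. -/
def BlocksOK {n : ℕ} (L : List (Finset (Fin n))) : Prop :=
  (∀ B ∈ L, B.Nonempty) ∧ L.Pairwise (fun B C => Disjoint B C) ∧
    ∀ i : Fin n, ∃ B ∈ L, i ∈ B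

/-- Set compositions of `[n]`, as lists of blocks. -/
def SetCompL (n : ℕ) := {L : List (Finset (Fin n)) // BlocksOK L}

/-- `minBlock L A` is `A` intersected with the earliest block of `L` meeting `A`
(the set of minima `A_π⃗`). -/
def minBlock {n : ℕ} : List (Finset (Fin n)) → Finset (Fin n) → Finset (Fin n)
  | [], _ => ∅
  | B :: t, A => if (A ∩ B).Nonempty then A ∩ B else minBlock t A

/-- The SC equivalence relation `∼` on set compositions: for every nonempty `A ⊆ [n]`,
the minima of `A` in `P` form a singleton iff the minima of `A` in `Q` do. -/
def SimL {n : ℕ} (P Q : SetCompL n) : Prop :=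
  ∀ A : Finset (Fin n), A.Nonempty →
    ((minBlock P.1 A).card = 1 ↔ (minBlock Q.1 A).card = 1)

/-- An *integral barred set composition* (IBSC): a set composition whose blocks may be
barred (`true` = barred), such that no two consecutive blocks are barred and every
singleton block is barred. -/
def IsIBSC {n : ℕ} (L : List (Finset (Fin n) × Bool)) : Prop :=
  BlocksOK (L.map Prod.fst) ∧
    L.Chain' (fun p q => ¬(p.2 = true ∧ q.2 = true)) ∧
    ∀ p ∈ L, p.1.card = 1 → p.2 = true

/-- Integral barred set compositions of `[n]`. -/
def IBSC (n : ℕ) := {L : List (Finset (Fin n) × Bool) // IsIBSC L}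

/-- Merge each maximal run of consecutive singleton blocks into a single barred block;
non-singleton blocks are left unbarred. -/
def mergeRuns {n : ℕ} : List (Finset (Fin n)) → List (Finset (Fin n) × Bool)
  | [] => []
  | B :: t =>
    if B.card = 1 then
      match mergeRuns t with
      | (C, true) :: t' => (B ∪ C, true) :: t'
      | r => (B, true) :: r
    else (B, false) :: mergeRuns t
variable {n : ℕ}

lemma minBlock_pos {B : Finset (Fin n)} {t A} (h : (A ∩ B).Nonempty) :
    minBlock (B :: t) A = A ∩ B := by simp [minBlock, h]

lemma minBlock_neg {B : Finset (Fin n)} {t A} (h : A ∩ B = ∅) :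
    minBlock (B :: t) A = minBlock t A := by
  simp [minBlock, h]

lemma mergeRuns_not_one {B : Finset (Fin n)} {t} (h : ¬ B.card = 1) :
    mergeRuns (B :: t) = (B, false) :: mergeRuns t := by
  simp [mergeRuns, h]

lemma mergeRuns_one_true {B C : Finset (Fin n)} {t t'} (h : B.card = 1)
    (h' : mergeRuns t = (C, true) :: t') :
    mergeRuns (B :: t) = (B ∪ C, true) :: t' := by
  simp [mergeRuns, h, h']

lemma mergeRuns_one_nil {B : Finset (Fin n)} {t} (h : B.card = 1)
    (h' : mergeRuns t = []) :
    mergeRuns (B :: t) = [(B, true)] := by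
  simp [mergeRuns, h, h']

lemma mergeRuns_one_false {B C : Finset (Fin n)} {t t'} (h : B.card = 1)
    (h' : mergeRuns t = (C, false) :: t') :
    mergeRuns (B :: t) = (B, true) :: (C, false) :: t' := by
  simp [mergeRuns, h, h']

/-- Union of a list of finsets. -/
def foldU (R : List (Finset (Fin n))) : Finset (Fin n) := R.foldr (· ∪ ·) ∅

@[simp] lemma foldU_nil : foldU ([] : List (Finset (Fin n))) = ∅ := rfl
@[simp] lemma foldU_cons (B : Finset (Fin n)) (R) : foldU (B :: R) = B ∪ foldU R := rfl

lemma mem_foldU {R : List (Finset (Fin n))} {i : Fin n} :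
    i ∈ foldU R ↔ ∃ B ∈ R, i ∈ B := by
  induction R with
  | nil => simp
  | cons B R ih => simp [ih]

lemma minBlock_append {R L : List (Finset (Fin n))} {A : Finset (Fin n)}
    (h : ∀ B ∈ R, A ∩ B = ∅) : minBlock (R ++ L) A = minBlock L A := by
  induction R with
  | nil => rfl
  | cons B R ih =>
      rw [List.cons_append, minBlock_neg (h B (by simp))]
      exact ih fun B hB => h B (by simp [hB])

lemma runPrepend {R rest : List (Finset (Fin n))} (hne : R ≠ [])
    (hsing : ∀ B ∈ R, B.card = 1)
    (hhead : ∀ C t', mergeRuns rest ≠ (C, true) :: t') :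
    mergeRuns (R ++ rest) = (foldU R, true) :: mergeRuns rest := by
  induction R with
  | nil => exact absurd rfl hne
  | cons B R ih =>
      rcases eq_or_ne R [] with rfl | hR
      · cases hm : mergeRuns rest with
        | nil => simp [mergeRuns_one_nil (hsing B (by simp)) hm, hm]
        | cons p t' =>
            obtain ⟨C, b⟩ := p
            cases b
            · simp [mergeRuns_one_false (hsing B (by simp)) hm, hm]
            · exact absurd hm (hhead C t')
      · rw [List.cons_append,
          mergeRuns_one_true (hsing B (by simp)) (ih hR fun B hB => hsing B (by simp [hB]))]
        simp

/-- The "min set is a singleton" predicate computed from a barred list. -/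
def predB : List (Finset (Fin n) × Bool) → Finset (Fin n) → Prop
  | [], _ => False
  | (M, b) :: t, A => if (A ∩ M).Nonempty then (b = true ∨ (A ∩ M).card = 1) else predB t A

lemma card_inter_singleton {A B : Finset (Fin n)} (hB : B.card = 1)
    (h : (A ∩ B).Nonempty) : (A ∩ B).card = 1 :=
  le_antisymm (hB ▸ Finset.card_le_card Finset.inter_subset_right)
    (Finset.one_le_card.2 h)

lemma minBlock_card_iff_predB (L : List (Finset (Fin n))) (A : Finset (Fin n)) :
    (minBlock L A).card = 1 ↔ predB (mergeRuns L) A := by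
  induction L with
  | nil => simp [minBlock, mergeRuns, predB]
  | cons B t ih =>
      by_cases hB : B.card = 1
      · by_cases hAB : (A ∩ B).Nonempty
        · rw [minBlock_pos hAB]
          cases hm : mergeRuns t with
          | nil =>
              rw [mergeRuns_one_nil hB hm]
              simp [predB, hAB, card_inter_singleton hB hAB]
          | cons p t' =>
              obtain ⟨C, b⟩ := p
              cases b
              · rw [mergeRuns_one_false hB hm]
                simp [predB, hAB, card_inter_singleton hB hAB]
              · rw [mergeRuns_one_true hB hm]
                have : (A ∩ (B ∪ C)).Nonempty := by
                  rw [Finset.inter_union_distrib_left]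
                  exact hAB.mono Finset.subset_union_left
                simp [predB, this, card_inter_singleton hB hAB]
        · rw [Finset.not_nonempty_iff_eq_empty] at hAB
          rw [minBlock_neg hAB, ih]
          cases hm : mergeRuns t with
          | nil => rw [mergeRuns_one_nil hB hm]; simp [predB, hAB]
          | cons p t' =>
              obtain ⟨C, b⟩ := p
              cases b
              · rw [mergeRuns_one_false hB hm]
                simp [predB, hAB]
              · rw [mergeRuns_one_true hB hm]
                have : A ∩ (B ∪ C) = A ∩ C := by
                  rw [Finset.inter_union_distrib_left, hAB, Finset.empty_union]
                simp [predB, this]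
      · rw [mergeRuns_not_one hB]
        by_cases hAB : (A ∩ B).Nonempty
        · rw [minBlock_pos hAB]; simp [predB, hAB]
        · rw [Finset.not_nonempty_iff_eq_empty] at hAB
          rw [minBlock_neg hAB, ih]; simp [predB, hAB]

lemma foldU_mergeRuns (L : List (Finset (Fin n))) :
    foldU ((mergeRuns L).map Prod.fst) = foldU L := by
  induction L with
  | nil => simp [mergeRuns]
  | cons B t ih =>
      by_cases hB : B.card = 1
      · cases hm : mergeRuns t with
        | nil =>
            rw [mergeRuns_one_nil hB hm]
            rw [hm] at ih
            simp at ih ⊢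
            rw [← ih]
            exact Finset.empty_subset B
        | cons p t' =>
            obtain ⟨C, b⟩ := p
            cases b
            · rw [mergeRuns_one_false hB hm]
              rw [hm] at ih
              simp at ih ⊢
              rw [← ih]
            · rw [mergeRuns_one_true hB hm]
              rw [hm] at ih
              simp at ih ⊢
              rw [ih]

      · rw [mergeRuns_not_one hB]
        simp at ih ⊢
        rw [← ih]

lemma subset_foldU {R : List (Finset (Fin n))} {B} (h : B ∈ R) : B ⊆ foldU R :=
  fun i hi => mem_foldU.2 ⟨B, h, hi⟩

lemma disjoint_foldU {R : List (Finset (Fin n))} {X} (h : ∀ B ∈ R, Disjoint X B) :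
    Disjoint X (foldU R) := by
  induction R with
  | nil => simp
  | cons B R ih =>
      simp only [foldU_cons, Finset.disjoint_union_right]
      exact ⟨h B (by simp), ih fun B hB => h B (by simp [hB])⟩

lemma mergeRuns_nonempty {L : List (Finset (Fin n))} (h : ∀ B ∈ L, B.Nonempty) :
    ∀ p ∈ mergeRuns L, p.1.Nonempty := by
  induction L with
  | nil => simp [mergeRuns]
  | cons B t ih =>
      have hB' := h B (by simp)
      have iht := ih fun B hB => h B (by simp [hB])
      by_cases hB : B.card = 1
      · cases hm : mergeRuns t with
        | nil =>
            rw [mergeRuns_one_nil hB hm]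
            intro p hp; simp at hp; subst hp; exact hB'
        | cons p t' =>
            obtain ⟨C, b⟩ := p
            rw [hm] at iht
            cases b
            · rw [mergeRuns_one_false hB hm]
              intro p hp
              rcases List.mem_cons.1 hp with rfl | hp
              · exact hB'
              · exact iht p hp
            · rw [mergeRuns_one_true hB hm]
              intro p hp
              rcases List.mem_cons.1 hp with rfl | hp
              · exact hB'.mono Finset.subset_union_left
              · exact iht p (by simp [hp])
      · rw [mergeRuns_not_one hB]
        intro p hp
        rcases List.mem_cons.1 hp with rfl | hp
        · exact hB'
        · exact iht p hp

lemma mergeRuns_sub {L : List (Finset (Fin n))} {p} (hp : p ∈ mergeRuns L) :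
    p.1 ⊆ foldU L := by
  rw [← foldU_mergeRuns]
  exact subset_foldU (List.mem_map_of_mem (f := Prod.fst) hp)

lemma mergeRuns_pairwise {L : List (Finset (Fin n))}
    (h : L.Pairwise (fun B C => Disjoint B C)) :
    (mergeRuns L).Pairwise (fun p q => Disjoint p.1 q.1) := by
  induction L with
  | nil => simp [mergeRuns]
  | cons B t ih =>
      rw [List.pairwise_cons] at h
      obtain ⟨hBd, ht⟩ := h
      have iht := ih ht
      have hBfold : Disjoint B (foldU t) := disjoint_foldU hBd
      have hBall : ∀ q ∈ mergeRuns t, Disjoint B q.1 :=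
        fun q hq => hBfold.mono_right (mergeRuns_sub hq)
      by_cases hB : B.card = 1
      · cases hm : mergeRuns t with
        | nil => rw [mergeRuns_one_nil hB hm]; simp
        | cons p t' =>
            obtain ⟨C, b⟩ := p
            rw [hm] at iht hBall
            cases b
            · rw [mergeRuns_one_false hB hm]
              exact List.pairwise_cons.2 ⟨hBall, iht⟩
            · rw [mergeRuns_one_true hB hm]
              rw [List.pairwise_cons] at iht
              refine List.pairwise_cons.2 ⟨fun q hq => ?_, iht.2⟩
              exact Finset.disjoint_union_left.2
                ⟨hBall q (by simp [hq]), iht.1 q hq⟩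
      · rw [mergeRuns_not_one hB]
        exact List.pairwise_cons.2 ⟨hBall, iht⟩

lemma mergeRuns_chain' (L : List (Finset (Fin n))) :
    (mergeRuns L).Chain' (fun p q => ¬(p.2 = true ∧ q.2 = true)) := by
  induction L with
  | nil => simp [mergeRuns, List.Chain']
  | cons B t ih =>
      by_cases hB : B.card = 1
      · cases hm : mergeRuns t with
        | nil => rw [mergeRuns_one_nil hB hm]; simp [List.Chain']
        | cons p t' =>
            obtain ⟨C, b⟩ := p
            rw [hm] at ih
            cases b
            · rw [mergeRuns_one_false hB hm]
              refine List.isChain_cons_cons.2 ⟨by simp, ih⟩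
            · rw [mergeRuns_one_true hB hm]
              cases t' with
              | nil => simp [List.Chain']
              | cons q t'' =>
                  simp only [List.Chain', List.isChain_cons_cons] at ih ⊢
                  exact ⟨ih.1, ih.2⟩
      · rw [mergeRuns_not_one hB]
        cases hm : mergeRuns t with
        | nil => simp [List.Chain']
        | cons p t' =>
            rw [hm] at ih
            exact List.isChain_cons_cons.2 ⟨by simp, ih⟩

lemma mergeRuns_sing_barred {L : List (Finset (Fin n))} :
    ∀ p ∈ mergeRuns L, p.1.card = 1 → p.2 = true := by
  induction L with
  | nil => simp [mergeRuns]
  | cons B t ih =>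
      by_cases hB : B.card = 1
      · cases hm : mergeRuns t with
        | nil =>
            rw [mergeRuns_one_nil hB hm]
            intro p hp _; simp at hp; subst hp; rfl
        | cons p t' =>
            obtain ⟨C, b⟩ := p
            rw [hm] at ih
            cases b
            · rw [mergeRuns_one_false hB hm]
              intro p hp hc
              rcases List.mem_cons.1 hp with rfl | hp
              · rfl
              · exact ih p hp hc
            · rw [mergeRuns_one_true hB hm]
              intro p hp hc
              rcases List.mem_cons.1 hp with rfl | hp
              · rfl
              · exact ih p (by simp [hp]) hc
      · rw [mergeRuns_not_one hB]
        intro p hp hc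
        rcases List.mem_cons.1 hp with rfl | hp
        · exact absurd hc hB
        · exact ih p hp hc

lemma mergeRuns_isIBSC {L : List (Finset (Fin n))} (h : BlocksOK L) :
    IsIBSC (mergeRuns L) := by
  obtain ⟨hne, hpw, hcov⟩ := h
  refine ⟨⟨?_, ?_, ?_⟩, mergeRuns_chain' L, mergeRuns_sing_barred⟩
  · intro B hB
    obtain ⟨p, hp, rfl⟩ := List.mem_map.1 hB
    exact mergeRuns_nonempty hne p hp
  · exact List.pairwise_map.2 (mergeRuns_pairwise hpw)
  · intro i
    obtain ⟨B, hB, hi⟩ := hcov i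
    have : i ∈ foldU ((mergeRuns L).map Prod.fst) := by
      rw [foldU_mergeRuns]; exact subset_foldU hB hi
    obtain ⟨C, hC, hiC⟩ := mem_foldU.1 this
    exact ⟨C, hC, hiC⟩

/-- Expand a barred composition: each barred block becomes a run of singletons. -/
noncomputable def expand : List (Finset (Fin n) × Bool) → List (Finset (Fin n))
  | [] => []
  | (M, true) :: K => M.toList.map (fun x => {x}) ++ expand K
  | (M, false) :: K => M :: expand K

@[simp] lemma expand_nil : expand ([] : List (Finset (Fin n) × Bool)) = [] := rfl

lemma expand_true (M : Finset (Fin n)) (K) :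
    expand ((M, true) :: K) = M.toList.map (fun x => {x}) ++ expand K := rfl

lemma expand_false (M : Finset (Fin n)) (K) :
    expand ((M, false) :: K) = M :: expand K := rfl

lemma foldU_singletons (M : Finset (Fin n)) :
    foldU (M.toList.map (fun x => {x})) = M := by
  ext i
  rw [mem_foldU]
  simp

lemma mem_expand {K : List (Finset (Fin n) × Bool)} {B} (hB : B ∈ expand K) :
    ∃ p ∈ K, B ⊆ p.1 ∧ (p.1.Nonempty → B.Nonempty) := by
  induction K with
  | nil => simp [expand] at hB
  | cons p K ih =>
      obtain ⟨M, b⟩ := p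
      cases b
      · rw [expand_false, List.mem_cons] at hB
        rcases hB with rfl | hB
        · exact ⟨(B, false), by simp, Finset.Subset.rfl, id⟩
        · obtain ⟨q, hq, h1, h2⟩ := ih hB
          exact ⟨q, by simp [hq], h1, h2⟩
      · rw [expand_true, List.mem_append] at hB
        rcases hB with hB | hB
        · obtain ⟨x, hx, rfl⟩ := List.mem_map.1 hB
          rw [Finset.mem_toList] at hx
          exact ⟨(M, true), by simp, Finset.singleton_subset_iff.2 hx,
            fun _ => ⟨x, by simp⟩⟩
        · obtain ⟨q, hq, h1, h2⟩ := ih hB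
          exact ⟨q, by simp [hq], h1, h2⟩

lemma expand_pairwise {K : List (Finset (Fin n) × Bool)}
    (hpw : (K.map Prod.fst).Pairwise (fun B C => Disjoint B C)) :
    (expand K).Pairwise (fun B C => Disjoint B C) := by
  induction K with
  | nil => simp [expand]
  | cons p K ih =>
      rw [List.map_cons, List.pairwise_cons] at hpw
      have hacross : ∀ B, B ⊆ p.1 → ∀ C ∈ expand K, Disjoint B C := by
        intro B hBsub C hC
        obtain ⟨q, hq, hsub, _⟩ := mem_expand hC
        exact ((hpw.1 q.1 (List.mem_map_of_mem (f := Prod.fst) hq)).mono hBsub hsub)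
      obtain ⟨M, b⟩ := p
      cases b
      · rw [expand_false, List.pairwise_cons]
        exact ⟨hacross M Finset.Subset.rfl, ih hpw.2⟩
      · rw [expand_true, List.pairwise_append]
        refine ⟨?_, ih hpw.2, ?_⟩
        · rw [List.pairwise_map]
          exact (Finset.nodup_toList M).imp fun hab => Finset.disjoint_singleton.2 hab
        · intro B hB C hC
          obtain ⟨x, hx, rfl⟩ := List.mem_map.1 hB
          rw [Finset.mem_toList] at hx
          exact hacross {x} (Finset.singleton_subset_iff.2 hx) C hC

lemma expand_cover {K : List (Finset (Fin n) × Bool)} {p} (hp : p ∈ K)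
    {i : Fin n} (hiM : i ∈ p.1) : ∃ B ∈ expand K, i ∈ B := by
  induction K with
  | nil => simp at hp
  | cons q K ih =>
      obtain ⟨N, b⟩ := q
      rcases List.mem_cons.1 hp with rfl | hp
      · cases b
        · exact ⟨N, by rw [expand_false]; simp, hiM⟩
        · refine ⟨{i}, ?_, by simp⟩
          rw [expand_true, List.mem_append]
          exact Or.inl (List.mem_map.2 ⟨i, Finset.mem_toList.2 hiM, rfl⟩)
      · obtain ⟨B, hB, hiB⟩ := ih hp
        cases b
        · exact ⟨B, by rw [expand_false]; simp [hB], hiB⟩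
        · exact ⟨B, by rw [expand_true]; simp [hB], hiB⟩

lemma expand_blocksOK {K : List (Finset (Fin n) × Bool)} (h : IsIBSC K) :
    BlocksOK (expand K) := by
  obtain ⟨⟨hne, hpw, hcov⟩, _, _⟩ := h
  have hne' : ∀ p ∈ K, p.1.Nonempty := fun p hp =>
    hne p.1 (List.mem_map_of_mem (f := Prod.fst) hp)
  refine ⟨?_, expand_pairwise hpw, ?_⟩
  · intro B hB
    obtain ⟨p, hp, _, h2⟩ := mem_expand hB
    exact h2 (hne' p hp)
  · intro i
    obtain ⟨M, hM, hiM⟩ := hcov i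
    obtain ⟨p, hp, rfl⟩ := List.mem_map.1 hM
    exact expand_cover hp hiM

lemma mergeRuns_expand {K : List (Finset (Fin n) × Bool)}
    (hne : ∀ p ∈ K, p.1.Nonempty)
    (hch : K.Chain' (fun p q => ¬(p.2 = true ∧ q.2 = true)))
    (hsb : ∀ p ∈ K, p.1.card = 1 → p.2 = true) :
    mergeRuns (expand K) = K := by
  induction K with
  | nil => simp [mergeRuns]
  | cons p K ih =>
      obtain ⟨M, b⟩ := p
      have hM : M.Nonempty := hne (M, b) (by simp)
      have ih' := ih (fun q hq => hne q (by simp [hq])) hch.tail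
        (fun q hq h1 => hsb q (by simp [hq]) h1)
      cases b
      · have hcard : M.card ≠ 1 := fun h => by simpa using hsb (M, false) (by simp) h
        rw [expand_false, mergeRuns_not_one hcard, ih']
      · rw [expand_true, runPrepend ?_ ?_ ?_]
        · rw [foldU_singletons, ih']
        · simp [hM.ne_empty]
        · intro B hB
          obtain ⟨x, _, rfl⟩ := List.mem_map.1 hB
          simp
        · intro C t' hCt'
          rw [ih'] at hCt'
          subst hCt'
          exact (List.isChain_cons_cons.1 hch).1 ⟨rfl, rfl⟩

/-- Blocks of a set composition of the finite set `S`. -/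
def BlocksOn (S : Finset (Fin n)) (L : List (Finset (Fin n))) : Prop :=
  (∀ B ∈ L, B.Nonempty) ∧ L.Pairwise (fun B C => Disjoint B C) ∧
    (∀ i ∈ S, ∃ B ∈ L, i ∈ B) ∧ ∀ B ∈ L, B ⊆ S

lemma blocksOn_drop {S : Finset (Fin n)} {R L'' : List (Finset (Fin n))}
    (h : BlocksOn S (R ++ L'')) : BlocksOn (S \ foldU R) L'' := by
  obtain ⟨hne, hpw, hcov, hsub⟩ := h
  rw [List.pairwise_append] at hpw
  refine ⟨fun B hB => hne B (by simp [hB]), hpw.2.1, ?_, ?_⟩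
  · intro i hi
    rw [Finset.mem_sdiff] at hi
    obtain ⟨Bl, hBl, hiBl⟩ := hcov i hi.1
    rcases List.mem_append.1 hBl with hBl | hBl
    · exact absurd (mem_foldU.2 ⟨Bl, hBl, hiBl⟩) hi.2
    · exact ⟨Bl, hBl, hiBl⟩
  · intro B hB
    rw [Finset.subset_sdiff]
    refine ⟨hsub B (by simp [hB]), ?_⟩
    exact disjoint_foldU fun B' hB' => (hpw.2.2 B' hB' B hB).symm

lemma inter_eq_empty_of_subset_sdiff {A B S U : Finset (Fin n)}
    (hA : A ⊆ S \ U) (hB : B ⊆ U) : A ∩ B = ∅ := by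
  rw [← Finset.disjoint_iff_inter_eq_empty]
  exact (Finset.sdiff_disjoint (s := U) (t := S)).mono hA hB

lemma run_mem_min {R L'' : List (Finset (Fin n))} (hsing : ∀ B ∈ R, B.card = 1)
    {i : Fin n} {A : Finset (Fin n)} (hiU : i ∈ foldU R) (hiA : i ∈ A) :
    (minBlock (R ++ L'') A).card = 1 := by
  induction R with
  | nil => simp at hiU
  | cons B R ih =>
      by_cases hAB : (A ∩ B).Nonempty
      · rw [List.cons_append, minBlock_pos hAB]
        exact card_inter_singleton (hsing B (by simp)) hAB
      · rw [Finset.not_nonempty_iff_eq_empty] at hAB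
        rw [List.cons_append, minBlock_neg hAB]
        refine ih (fun B' hB' => hsing B' (by simp [hB'])) ?_
        rcases mem_foldU.1 hiU with ⟨B', hB', hiB'⟩
        rcases List.mem_cons.1 hB' with rfl | hB'
        · exact absurd (Finset.mem_inter.2 ⟨hiA, hiB'⟩) (by simp [hAB])
        · exact mem_foldU.2 ⟨B', hB', hiB'⟩

lemma card_pair_ne {i j : Fin n} (h : j ≠ i) : ({i, j} : Finset (Fin n)).card = 2 := by
  rw [Finset.card_insert_of_notMem (by simp [h.symm])]
  rfl

lemma mem_head_char {S : Finset (Fin n)} {B : Finset (Fin n)} {L' : List (Finset (Fin n))}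
    (h : BlocksOn S (B :: L')) (hB1 : B.card ≠ 1) {i : Fin n} (hi : i ∈ S) :
    i ∈ B ↔ ∃ j ∈ S, j ≠ i ∧ ¬((minBlock (B :: L') {i, j}).card = 1) ∧
      ∀ k ∈ S, ¬((minBlock (B :: L') {i, j, k}).card = 1) := by
  obtain ⟨hne, hpw, hcov, hsub⟩ := h
  have hBne : B.Nonempty := hne B (by simp)
  have hBS : B ⊆ S := hsub B (by simp)
  constructor
  · intro hiB
    have h2 : 1 < B.card := lt_of_le_of_ne (Finset.one_le_card.2 hBne) (Ne.symm hB1)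
    obtain ⟨j, hjB, hji⟩ := Finset.exists_mem_ne h2 i
    refine ⟨j, hBS hjB, hji, ?_, ?_⟩
    · have hsubB : ({i, j} : Finset (Fin n)) ⊆ B := by
        intro x hx; rcases Finset.mem_insert.1 hx with rfl | hx
        · exact hiB
        · rwa [Finset.mem_singleton.1 hx]
      rw [minBlock_pos (⟨i, by simp [hiB]⟩ : (({i,j} : Finset (Fin n)) ∩ B).Nonempty),
        Finset.inter_eq_left.2 hsubB, card_pair_ne hji]
      omega
    · intro k _
      have hmem : ({i, j} : Finset (Fin n)) ⊆ {i, j, k} ∩ B := by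
        intro x hx; rcases Finset.mem_insert.1 hx with rfl | hx
        · exact Finset.mem_inter.2 ⟨by simp, hiB⟩
        · rw [Finset.mem_singleton.1 hx]
          exact Finset.mem_inter.2 ⟨by simp, hjB⟩
      rw [minBlock_pos ⟨i, hmem (by simp)⟩]
      have := Finset.card_le_card hmem
      rw [card_pair_ne hji] at this
      omega
  · rintro ⟨j, hjS, hji, h1, h2⟩
    by_contra hiB
    by_cases hjB : j ∈ B
    · refine h1 ?_
      have : ({i, j} : Finset (Fin n)) ∩ B = {j} := by
        ext x
        simp only [Finset.mem_inter, Finset.mem_insert, Finset.mem_singleton]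
        constructor
        · rintro ⟨rfl | rfl, hxB⟩
          · exact absurd hxB hiB
          · rfl
        · rintro rfl; exact ⟨Or.inr rfl, hjB⟩
      rw [minBlock_pos (by rw [this]; exact ⟨j, by simp⟩), this, Finset.card_singleton]
    · obtain ⟨k, hkB⟩ := hBne
      refine h2 k (hBS hkB) ?_
      have : ({i, j, k} : Finset (Fin n)) ∩ B = {k} := by
        ext x
        simp only [Finset.mem_inter, Finset.mem_insert, Finset.mem_singleton]
        constructor
        · rintro ⟨rfl | rfl | rfl, hxB⟩
          · exact absurd hxB hiB
          · exact absurd hxB hjB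
          · rfl
        · rintro rfl; exact ⟨Or.inr (Or.inr rfl), hkB⟩
      rw [minBlock_pos (by rw [this]; exact ⟨k, by simp⟩), this, Finset.card_singleton]

lemma mem_run_char {S : Finset (Fin n)} {R L'' : List (Finset (Fin n))}
    (h : BlocksOn S (R ++ L'')) (hsing : ∀ B ∈ R, B.card = 1)
    (hL'' : ∀ D ∈ L''.head?, ¬D.card = 1)
    {i : Fin n} (hi : i ∈ S) :
    i ∈ foldU R ↔ ∀ A ⊆ S, i ∈ A → (minBlock (R ++ L'') A).card = 1 := by
  obtain ⟨hne, hpw, hcov, hsub⟩ := h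
  constructor
  · intro hiU A _ hiA
    exact run_mem_min hsing hiU hiA
  · intro hA
    by_contra hiU
    obtain ⟨Bl, hBl, hiBl⟩ := hcov i hi
    have hBl'' : Bl ∈ L'' := by
      rcases List.mem_append.1 hBl with hBl | hBl
      · exact absurd (mem_foldU.2 ⟨Bl, hBl, hiBl⟩) hiU
      · exact hBl
    obtain ⟨D, L₃⟩ : ∃ D L₃, L'' = D :: L₃ := by
      cases L'' with
      | nil => simp at hBl''
      | cons D L₃ => exact ⟨D, L₃, rfl⟩
    obtain ⟨L₃, rfl⟩ := L₃
    have hD1 : ¬D.card = 1 := hL'' D rfl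
    have hDS : D ⊆ S := hsub D (by simp)
    have hDne : D.Nonempty := hne D (by simp)
    set A : Finset (Fin n) := insert i D with hAdef
    have hiA : i ∈ A := by simp [hAdef]
    have hAS : A ⊆ S := Finset.insert_subset hi hDS
    refine absurd (hA A hAS hiA) ?_
    have hRdis : ∀ B ∈ R, A ∩ B = ∅ := by
      intro B hB
      rw [Finset.eq_empty_iff_forall_notMem]
      intro x hx
      rw [Finset.mem_inter, hAdef, Finset.mem_insert] at hx
      obtain ⟨hx1 | hx1, hx2⟩ := hx
      · subst hx1
        exact hiU (mem_foldU.2 ⟨B, hB, hx2⟩)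
      · have hdisj : Disjoint B D := by
          rw [List.pairwise_append] at hpw
          exact hpw.2.2 B hB D (by simp)
        exact Finset.disjoint_left.1 hdisj hx2 hx1
    have hDA : A ∩ D = D := Finset.inter_eq_right.2 (Finset.subset_insert i D)
    rw [minBlock_append hRdis, minBlock_pos (by rw [hDA]; exact hDne), hDA]
    exact hD1

lemma head_minBlock {S B : Finset (Fin n)} {L' : List (Finset (Fin n))}
    (hBS : B ⊆ S) (hBne : B.Nonempty) : minBlock (B :: L') S = B := by
  rw [minBlock_pos (by rw [Finset.inter_eq_right.2 hBS]; exact hBne),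
    Finset.inter_eq_right.2 hBS]

lemma merge_eq_of_f (S : Finset (Fin n)) :
    ∀ L M : List (Finset (Fin n)), BlocksOn S L → BlocksOn S M →
      (∀ A ⊆ S, A.Nonempty → ((minBlock L A).card = 1 ↔ (minBlock M A).card = 1)) →
      mergeRuns L = mergeRuns M := by
  induction S using Finset.strongInduction with
  | _ S ih =>
  intro L M hL hM hf
  rcases S.eq_empty_or_nonempty with rfl | hS
  · have h1 : L = [] := by
      cases L with
      | nil => rfl
      | cons B t =>
          exact absurd (Finset.subset_empty.1 (hL.2.2.2 B (by simp)))
            (hL.1 B (by simp)).ne_empty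
    have h2 : M = [] := by
      cases M with
      | nil => rfl
      | cons B t =>
          exact absurd (Finset.subset_empty.1 (hM.2.2.2 B (by simp)))
            (hM.1 B (by simp)).ne_empty
    rw [h1, h2]
  · obtain ⟨i0, hi0⟩ := hS
    obtain ⟨B, L', rfl⟩ : ∃ B L', L = B :: L' := by
      cases L with
      | nil => obtain ⟨Bl, hBl, _⟩ := hL.2.2.1 i0 hi0; simp at hBl
      | cons B L' => exact ⟨B, L', rfl⟩
    obtain ⟨C, M', rfl⟩ : ∃ C M', M = C :: M' := by
      cases M with
      | nil => obtain ⟨Bl, hBl, _⟩ := hM.2.2.1 i0 hi0; simp at hBl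
      | cons C M' => exact ⟨C, M', rfl⟩
    have hBne : B.Nonempty := hL.1 B (by simp)
    have hBS : B ⊆ S := hL.2.2.2 B (by simp)
    have hCne : C.Nonempty := hM.1 C (by simp)
    have hCS : C ⊆ S := hM.2.2.2 C (by simp)
    have hfS := hf S Finset.Subset.rfl ⟨i0, hi0⟩
    rw [head_minBlock hBS hBne, head_minBlock hCS hCne] at hfS
    by_cases hB1 : B.card = 1
    · -- barred case
      have hC1 : C.card = 1 := hfS.1 hB1
      set pc : Finset (Fin n) → Bool := fun X => X.card = 1 with hpc
      have hpcB : pc B = true := by simp [hpc, hB1]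
      have hpcC : pc C = true := by simp [hpc, hC1]
      set R := (B :: L').takeWhile pc with hRdef
      set L'' := (B :: L').dropWhile pc with hLdef
      set Rm := (C :: M').takeWhile pc with hRmdef
      set M'' := (C :: M').dropWhile pc with hMdef
      have hLsplit : R ++ L'' = B :: L' := List.takeWhile_append_dropWhile (p := pc) (l := B :: L')
      have hMsplit : Rm ++ M'' = C :: M' := List.takeWhile_append_dropWhile (p := pc) (l := C :: M')
      have hLon : BlocksOn S (R ++ L'') := by rw [hLsplit]; exact hL
      have hMon : BlocksOn S (Rm ++ M'') := by rw [hMsplit]; exact hM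
      have hsingR : ∀ X ∈ R, X.card = 1 := fun X hX => by
        simpa [hpc] using List.mem_takeWhile_imp hX
      have hsingRm : ∀ X ∈ Rm, X.card = 1 := fun X hX => by
        simpa [hpc] using List.mem_takeWhile_imp hX
      have hheadL : ∀ D ∈ L''.head?, ¬D.card = 1 := by
        intro D hD
        have h2 := List.head?_dropWhile_not pc (B :: L')
        rw [← hLdef, Option.mem_def.1 hD] at h2
        simpa [hpc] using h2
      have hheadM : ∀ D ∈ M''.head?, ¬D.card = 1 := by
        intro D hD
        have h2 := List.head?_dropWhile_not pc (C :: M')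
        rw [← hMdef, Option.mem_def.1 hD] at h2
        simpa [hpc] using h2
      have hRsubS : foldU R ⊆ S := by
        intro x hx
        obtain ⟨X, hX, hxX⟩ := mem_foldU.1 hx
        exact hL.2.2.2 X ((List.takeWhile_sublist pc).subset hX) hxX
      have hRmsubS : foldU Rm ⊆ S := by
        intro x hx
        obtain ⟨X, hX, hxX⟩ := mem_foldU.1 hx
        exact hM.2.2.2 X ((List.takeWhile_sublist pc).subset hX) hxX
      have hUV : foldU R = foldU Rm := by
        ext x
        by_cases hx : x ∈ S
        · rw [mem_run_char hLon hsingR hheadL hx, mem_run_char hMon hsingRm hheadM hx]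
          constructor
          · intro hA A hAS hxA
            have := hf A hAS ⟨x, hxA⟩
            rw [← hLsplit, ← hMsplit] at this
            exact this.1 (hA A hAS hxA)
          · intro hA A hAS hxA
            have := hf A hAS ⟨x, hxA⟩
            rw [← hLsplit, ← hMsplit] at this
            exact this.2 (hA A hAS hxA)
        · constructor
          · intro h; exact absurd (hRsubS h) hx
          · intro h; exact absurd (hRmsubS h) hx
      have hRcons : R = B :: L'.takeWhile pc := by
        rw [hRdef, List.takeWhile_cons_of_pos hpcB]
      have hRmcons : Rm = C :: M'.takeWhile pc := by
        rw [hRmdef, List.takeWhile_cons_of_pos hpcC]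
      have hRne : R ≠ [] := by rw [hRcons]; simp
      have hRmne : Rm ≠ [] := by rw [hRmcons]; simp
      have hUne : (foldU R).Nonempty := by
        obtain ⟨x, hx⟩ := hBne
        exact ⟨x, mem_foldU.2 ⟨B, by rw [hRcons]; simp, hx⟩⟩
      have hmhead : ∀ (X : Finset (Fin n)) t', mergeRuns L'' ≠ (X, true) :: t' := by
        cases hE : L'' with
        | nil => simp [mergeRuns]
        | cons D L₃ =>
            rw [mergeRuns_not_one (hheadL D (by rw [hE]; rfl))]
            intro X t' hcon
            simp at hcon
      have hmheadM : ∀ (X : Finset (Fin n)) t', mergeRuns M'' ≠ (X, true) :: t' := by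
        cases hE : M'' with
        | nil => simp [mergeRuns]
        | cons D L₃ =>
            rw [mergeRuns_not_one (hheadM D (by rw [hE]; rfl))]
            intro X t' hcon
            simp at hcon
      have hmergeL : mergeRuns (B :: L') = (foldU R, true) :: mergeRuns L'' := by
        rw [← hLsplit]; exact runPrepend hRne hsingR hmhead
      have hmergeM : mergeRuns (C :: M') = (foldU Rm, true) :: mergeRuns M'' := by
        rw [← hMsplit]; exact runPrepend hRmne hsingRm hmheadM
      have hLdrop : BlocksOn (S \ foldU R) L'' := blocksOn_drop hLon
      have hMdrop : BlocksOn (S \ foldU R) M'' := by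
        rw [hUV]; exact blocksOn_drop hMon
      have htail := ih (S \ foldU R) (Finset.sdiff_ssubset hRsubS hUne) L'' M''
        hLdrop hMdrop ?_
      · rw [hmergeL, hmergeM, htail, hUV]
      · intro A hA hAne
        have hAS : A ⊆ S := hA.trans (Finset.sdiff_subset)
        have h1 : minBlock (R ++ L'') A = minBlock L'' A :=
          minBlock_append fun X hX =>
            inter_eq_empty_of_subset_sdiff hA (subset_foldU hX)
        have h2 : minBlock (Rm ++ M'') A = minBlock M'' A :=
          minBlock_append fun X hX =>
            inter_eq_empty_of_subset_sdiff (by rw [hUV] at hA; exact hA) (subset_foldU hX)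
        have := hf A hAS hAne
        rw [← hLsplit, ← hMsplit, h1, h2] at this
        exact this
    · -- unbarred case
      have hC1 : ¬C.card = 1 := fun h => hB1 (hfS.2 h)
      have hBC : B = C := by
        ext x
        by_cases hx : x ∈ S
        · rw [mem_head_char hL hB1 hx, mem_head_char hM hC1 hx]
          constructor
          · rintro ⟨j, hj, hji, h1, h2⟩
            refine ⟨j, hj, hji, fun hc => h1 ?_, fun k hk hc => h2 k hk ?_⟩
            · exact (hf {x, j} (Finset.insert_subset hx (by simpa using hj)) (by simp)).2 hc
            · exact (hf {x, j, k}
                (Finset.insert_subset hx (Finset.insert_subset hj (by simpa using hk)))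
                (by simp)).2 hc
          · rintro ⟨j, hj, hji, h1, h2⟩
            refine ⟨j, hj, hji, fun hc => h1 ?_, fun k hk hc => h2 k hk ?_⟩
            · exact (hf {x, j} (Finset.insert_subset hx (by simpa using hj)) (by simp)).1 hc
            · exact (hf {x, j, k}
                (Finset.insert_subset hx (Finset.insert_subset hj (by simpa using hk)))
                (by simp)).1 hc
        · constructor
          · intro hxB; exact absurd (hBS hxB) hx
          · intro hxC; exact absurd (hCS hxC) hx
      have hLdrop : BlocksOn (S \ B) L' := by
        have := blocksOn_drop (R := [B]) (L'' := L') (by simpa using hL)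
        simpa using this
      have hMdrop : BlocksOn (S \ B) M' := by
        have := blocksOn_drop (R := [C]) (L'' := M') (by simpa using hM)
        rw [hBC]
        simpa using this
      have htail := ih (S \ B) (Finset.sdiff_ssubset hBS hBne) L' M' hLdrop hMdrop ?_
      · rw [mergeRuns_not_one hB1, mergeRuns_not_one hC1, htail, hBC]
      · intro A hA hAne
        have hAS : A ⊆ S := hA.trans (Finset.sdiff_subset)
        have hAB : A ∩ B = ∅ := inter_eq_empty_of_subset_sdiff hA Finset.Subset.rfl
        have hAC : A ∩ C = ∅ := by rw [← hBC]; exact hAB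
        have := hf A hAS hAne
        rw [minBlock_neg hAB, minBlock_neg hAC] at this
        exact this

lemma blocksOK_blocksOn {L : List (Finset (Fin n))} (h : BlocksOK L) :
    BlocksOn Finset.univ L :=
  ⟨h.1, h.2.1, fun i _ => h.2.2 i, fun B _ => B.subset_univ⟩

lemma sim_merge_eq {P Q : SetCompL n} (h : SimL P Q) :
    mergeRuns P.1 = mergeRuns Q.1 :=
  merge_eq_of_f Finset.univ P.1 Q.1 (blocksOK_blocksOn P.2) (blocksOK_blocksOn Q.2)
    (fun A _ hAne => h A hAne)

lemma merge_eq_sim {P Q : SetCompL n} (h : mergeRuns P.1 = mergeRuns Q.1) :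
    SimL P Q := by
  intro A _
  rw [minBlock_card_iff_predB, minBlock_card_iff_predB, h]

/-- The equivalence classes of set compositions of `[n]` under `∼` are in
bijection with integral barred set compositions of `[n]`, via the map merging each maximal
run of consecutive singleton blocks into one barred block. -/
theorem stmt15 (n : ℕ) :
    ∃ e : Quot (fun P Q : SetCompL n => SimL P Q) ≃ IBSC n,
      ∀ P : SetCompL n, (e (Quot.mk _ P)).1 = mergeRuns P.1 := by
  have hlift : ∀ P Q : SetCompL n, SimL P Q →
      (⟨mergeRuns P.1, mergeRuns_isIBSC P.2⟩ : IBSC n) =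
        ⟨mergeRuns Q.1, mergeRuns_isIBSC Q.2⟩ :=
    fun P Q h => Subtype.ext (sim_merge_eq h)
  have hbij : Function.Bijective
      (Quot.lift (fun P : SetCompL n => (⟨mergeRuns P.1, mergeRuns_isIBSC P.2⟩ : IBSC n)) hlift) := by
    constructor
    · intro x y
      induction x using Quot.ind with | _ P =>
      induction y using Quot.ind with | _ Q =>
      intro hxy
      exact Quot.sound (merge_eq_sim (congrArg Subtype.val hxy))
    · intro K
      obtain ⟨K, hK⟩ := K
      have hne' : ∀ p ∈ K, p.1.Nonempty := fun p hp =>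
        hK.1.1 p.1 (List.mem_map_of_mem (f := Prod.fst) hp)
      refine ⟨Quot.mk _ ⟨expand K, expand_blocksOK hK⟩, ?_⟩
      exact Subtype.ext (mergeRuns_expand hne' hK.2.1 hK.2.2)
  exact ⟨Equiv.ofBijective _ hbij, fun P => rfl⟩
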